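/- arXiv:1511.05872 — 2 statements merged into one kernel-verified Lean document; each statement's English description precedes it below -/
import Mathlib

section
/- If λ ∈ ℂ satisfies λ² + μλ + 1 = 0 for some μ ∈ ℂ with μ ≠ -2 and μ ≠ 2, then j(λ) = 256(λ² - λ + 1)³ / (λ² - λ)² = 256(μ+1)³/(μ+2). -/
theorem stmt_7 (lam mu : ℂ) (hmu2 : mu ≠ -2) (hmu2' : mu ≠ 2)
    (h : lam^2 + mu * lam + 1 = 0) :
    256 * (lam^2 - lam + 1)^3 / (lam^2 - lam)^2 = 256 * (mu + 1)^3 / (mu + 2) := by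
  have hl0 : lam ≠ 0 := by rintro rfl; simp at h
  have hl1 : lam ≠ 1 := by
    rintro rfl
    apply hmu2
    have : mu + 2 = 0 := by linear_combination h
    linear_combination this
  have hm2 : mu + 2 ≠ 0 := by
    intro hc; exact hmu2 (by linear_combination hc)
  have hb : lam^2 - lam ≠ 0 := by
    intro hc
    rcases mul_eq_zero.mp (by linear_combination hc : lam * (lam - 1) = 0) with h1 | h1
    · exact hl0 h1
    · exact hl1 (by linear_combination h1)
  have hb2 : (lam^2 - lam)^2 ≠ 0 := pow_ne_zero _ hb
  field_simp
  ring_nf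
  linear_combination (2 + mu - 6*lam - 5*lam*mu - lam*mu^2
    + 9*lam^2 + 8*lam^2*mu + 2*lam^2*mu^2 - 6*lam^3 - 5*lam^3*mu
    - lam^3*mu^2 + 2*lam^4 + lam^4*mu) * h
end

section
/- The polynomial identity (-1/4)(x-1)(x-β²)(x+β)² - β²x(x-β)² = (-1/4)(x² - (8β+2)x + β²)² holds in ℂ[x] whenever β² + 6β + 1 = 0. -/
theorem stmt_13 (β : ℂ) (hβ : β^2 + 6*β + 1 = 0) :
    ∀ x : ℂ, (-1/4 : ℂ) * (x - 1) * (x - β^2) * (x + β)^2 - β^2 * x * (x - β)^2 =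
      (-1/4 : ℂ) * (x^2 - (8*β + 2)*x + β^2)^2 := by
  intro x
  linear_combination (x^2 - 3/4*x^3 + 5/2*x^2*β - 3/4*x*β^2) * hβ
end
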